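/- One-step ISS contraction (intermediate claim in the proof of Theorem 1): set σ̄_f = σ(‖[W_f U_f b_f]‖_∞) and σ̄_z = σ(‖[W_z U_z b_z]‖_∞), and suppose ‖U_r‖_∞ σ̄_f < 1. Then there exists δ ∈ (0,1) such that for every u ∈ ℝ^{n_u} with ‖u‖_∞ ≤ 1 and every x ∈ ℝ^{n_x} with ‖x‖_∞ ≤ 1, the GRU successor state satisfies ‖x⁺‖_∞ ≤ (1 − δ) ‖x‖_∞ + σ̄_z ‖W_r‖_∞ ‖u‖_∞ + σ̄_z ‖b_r‖_∞. -/

import Mathlib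

open Real Filter

/-- The sigmoid activation function. -/
noncomputable def sigmoid (s : ℝ) : ℝ := 1 / (1 + Real.exp (-s))

/-- Induced infinity norm of a matrix (maximum absolute row sum). -/
noncomputable def matNorm {n m : ℕ} (A : Matrix (Fin n) (Fin m) ℝ) : ℝ :=
  ⨆ i, ∑ j, |A i j|

/-- Infinity norm of the horizontal concatenation `[A B c]`
(maximum absolute row sum of the concatenated matrix). -/
noncomputable def catNorm {n m p : ℕ} (A : Matrix (Fin n) (Fin m) ℝ)
    (B : Matrix (Fin n) (Fin p) ℝ) (c : Fin n → ℝ) : ℝ :=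
  ⨆ i, (∑ j, |A i j| + ∑ j, |B i j| + |c i|)

/-- One step of the single-layer GRU:
`x⁺ = z ∘ x + (1 - z) ∘ tanh(W_r u + U_r (f ∘ x) + b_r)`,
`z = σ(W_z u + U_z x + b_z)`, `f = σ(W_f u + U_f x + b_f)`. -/
noncomputable def gruStep {nu nx : ℕ}
    (Wz Wf Wr : Matrix (Fin nx) (Fin nu) ℝ)
    (Uz Uf Ur : Matrix (Fin nx) (Fin nx) ℝ)
    (bz bf br : Fin nx → ℝ)
    (u : Fin nu → ℝ) (x : Fin nx → ℝ) : Fin nx → ℝ :=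
  let z : Fin nx → ℝ := fun i => _root_.sigmoid ((Wz.mulVec u + Uz.mulVec x + bz) i)
  let f : Fin nx → ℝ := fun i => _root_.sigmoid ((Wf.mulVec u + Uf.mulVec x + bf) i)
  let r : Fin nx → ℝ := fun i => Real.tanh ((Wr.mulVec u + Ur.mulVec (f * x) + br) i)
  fun j => z j * x j + (1 - z j) * r j

lemma sigmoid_pos (s : ℝ) : 0 < _root_.sigmoid s := by
  unfold _root_.sigmoid; positivity

lemma sigmoid_lt_one (s : ℝ) : _root_.sigmoid s < 1 := by
  unfold _root_.sigmoid
  rw [div_lt_one (by positivity)]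
  linarith [Real.exp_pos (-s)]

lemma sigmoid_mono {s t : ℝ} (h : s ≤ t) : _root_.sigmoid s ≤ _root_.sigmoid t := by
  unfold _root_.sigmoid
  apply one_div_le_one_div_of_le (by positivity)
  have := Real.exp_le_exp.2 (neg_le_neg h)
  linarith

lemma one_sub_sigmoid (s : ℝ) : 1 - _root_.sigmoid s = _root_.sigmoid (-s) := by
  unfold _root_.sigmoid
  rw [neg_neg, Real.exp_neg]
  have h := Real.exp_pos s
  field_simp
  ring

lemma sinh_le_mul_cosh {x : ℝ} (hx : 0 ≤ x) : Real.sinh x ≤ x * Real.cosh x := by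
  have hd : ∀ y : ℝ, HasDerivAt (fun t => t * Real.cosh t - Real.sinh t) (y * Real.sinh y) y := by
    intro y
    have h1 := ((hasDerivAt_id y).mul (Real.hasDerivAt_cosh y)).sub (Real.hasDerivAt_sinh y)
    refine h1.congr_deriv ?_
    simp [id]
  have hmono : MonotoneOn (fun t => t * Real.cosh t - Real.sinh t) (Set.Ici 0) := by
    apply monotoneOn_of_deriv_nonneg (convex_Ici 0)
    · exact ((continuous_id.mul Real.continuous_cosh).sub Real.continuous_sinh).continuousOn
    · exact fun y _ => (hd y).differentiableAt.differentiableWithinAt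
    · intro y hy
      rw [interior_Ici] at hy
      rw [(hd y).deriv]
      exact mul_nonneg (le_of_lt hy) (Real.sinh_nonneg_iff.2 (le_of_lt hy))
  have := hmono (Set.self_mem_Ici) (Set.mem_Ici.2 hx) hx
  simpa using this

lemma abs_tanh_le (s : ℝ) : |Real.tanh s| ≤ |s| := by
  have key : ∀ t : ℝ, 0 ≤ t → |Real.tanh t| ≤ |t| := by
    intro t ht
    have hc := Real.cosh_pos t
    have hs : 0 ≤ Real.sinh t := Real.sinh_nonneg_iff.2 ht
    have h1 : 0 ≤ Real.tanh t := by
      rw [Real.tanh_eq_sinh_div_cosh]; positivity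
    have h2 : Real.tanh t ≤ t := by
      rw [Real.tanh_eq_sinh_div_cosh, div_le_iff₀ hc]
      exact sinh_le_mul_cosh ht
    rw [abs_of_nonneg h1, abs_of_nonneg ht]
    exact h2
  rcases le_total 0 s with h | h
  · exact key s h
  · have := key (-s) (by linarith)
    rwa [Real.tanh_neg, abs_neg, abs_neg] at this

lemma rowSum_le_matNorm {n m : ℕ} (A : Matrix (Fin n) (Fin m) ℝ) (i : Fin n) :
    ∑ j, |A i j| ≤ matNorm A :=
  le_ciSup (f := fun i => ∑ j, |A i j|) (Set.Finite.bddAbove (Set.finite_range _)) i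

lemma matNorm_nonneg {n m : ℕ} (A : Matrix (Fin n) (Fin m) ℝ) : 0 ≤ matNorm A :=
  Real.iSup_nonneg fun _ => Finset.sum_nonneg fun _ _ => abs_nonneg _

lemma row_le_catNorm {n m p : ℕ} (A : Matrix (Fin n) (Fin m) ℝ)
    (B : Matrix (Fin n) (Fin p) ℝ) (c : Fin n → ℝ) (i : Fin n) :
    ∑ j, |A i j| + ∑ j, |B i j| + |c i| ≤ catNorm A B c :=
  le_ciSup (f := fun i => ∑ j, |A i j| + ∑ j, |B i j| + |c i|)
    (Set.Finite.bddAbove (Set.finite_range _)) i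

lemma mulVec_abs_le {n m : ℕ} (A : Matrix (Fin n) (Fin m) ℝ) (v : Fin m → ℝ) (i : Fin n) :
    |A.mulVec v i| ≤ (∑ j, |A i j|) * ‖v‖ := by
  calc |A.mulVec v i| = |∑ j, A i j * v j| := by rfl
    _ ≤ ∑ j, |A i j * v j| := Finset.abs_sum_le_sum_abs _ _
    _ ≤ ∑ j, |A i j| * ‖v‖ := by
        refine Finset.sum_le_sum fun j _ => ?_
        rw [abs_mul]
        exact mul_le_mul_of_nonneg_left ((Real.norm_eq_abs (v j)) ▸ norm_le_pi_norm v j)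
          (abs_nonneg _)
    _ = _ := by rw [← Finset.sum_mul]

lemma gruStep_apply {nu nx : ℕ}
    (Wz Wf Wr : Matrix (Fin nx) (Fin nu) ℝ)
    (Uz Uf Ur : Matrix (Fin nx) (Fin nx) ℝ)
    (bz bf br : Fin nx → ℝ)
    (u : Fin nu → ℝ) (x : Fin nx → ℝ) (j : Fin nx) :
    gruStep Wz Wf Wr Uz Uf Ur bz bf br u x j =
      _root_.sigmoid ((Wz.mulVec u + Uz.mulVec x + bz) j) * x j +
      (1 - _root_.sigmoid ((Wz.mulVec u + Uz.mulVec x + bz) j)) *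
        Real.tanh ((Wr.mulVec u +
          Ur.mulVec ((fun i => _root_.sigmoid ((Wf.mulVec u + Uf.mulVec x + bf) i)) * x) + br) j) := rfl

/-- **One-step ISS contraction (intermediate claim in the proof of Theorem 1).**
With `σ̄_f = σ(‖[W_f U_f b_f]‖_∞)` and `σ̄_z = σ(‖[W_z U_z b_z]‖_∞)`, if
`‖U_r‖_∞ σ̄_f < 1` then there exists `δ ∈ (0,1)` such that for all unity-bounded `u`, `x`,
`‖x⁺‖_∞ ≤ (1 - δ) ‖x‖_∞ + σ̄_z ‖W_r‖_∞ ‖u‖_∞ + σ̄_z ‖b_r‖_∞`. -/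
theorem gru_one_step_ISS_contraction {nu nx : ℕ}
    (Wz Wf Wr : Matrix (Fin nx) (Fin nu) ℝ)
    (Uz Uf Ur : Matrix (Fin nx) (Fin nx) ℝ)
    (bz bf br : Fin nx → ℝ)
    (hcond : matNorm Ur * _root_.sigmoid (catNorm Wf Uf bf) < 1) :
    ∃ δ : ℝ, 0 < δ ∧ δ < 1 ∧
      ∀ u : Fin nu → ℝ, ‖u‖ ≤ 1 → ∀ x : Fin nx → ℝ, ‖x‖ ≤ 1 →
        ‖gruStep Wz Wf Wr Uz Uf Ur bz bf br u x‖ ≤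
          (1 - δ) * ‖x‖ + _root_.sigmoid (catNorm Wz Uz bz) * matNorm Wr * ‖u‖ +
            _root_.sigmoid (catNorm Wz Uz bz) * ‖br‖ := by
  set σf := _root_.sigmoid (catNorm Wf Uf bf) with hσf
  set σz := _root_.sigmoid (catNorm Wz Uz bz) with hσz
  set a := matNorm Ur * σf with ha
  have hσf0 : 0 < σf := sigmoid_pos _
  have hσf1 : σf < 1 := sigmoid_lt_one _
  have hσz0 : 0 < σz := sigmoid_pos _
  have hσz1 : σz < 1 := sigmoid_lt_one _
  have ha0 : 0 ≤ a := mul_nonneg (matNorm_nonneg _) hσf0.le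
  have ha1 : a < 1 := hcond
  refine ⟨(1 - σz) * (1 - a), mul_pos (by linarith) (by linarith), ?_, ?_⟩
  · nlinarith
  intro u hu x hx
  set δ := (1 - σz) * (1 - a) with hδ
  have hδ1 : δ < 1 := by nlinarith
  have hx0 : (0:ℝ) ≤ ‖x‖ := norm_nonneg x
  have hu0 : (0:ℝ) ≤ ‖u‖ := norm_nonneg u
  have hWr0 : 0 ≤ matNorm Wr := matNorm_nonneg _
  have hbr0 : (0:ℝ) ≤ ‖br‖ := norm_nonneg br
  have hRHS0 : 0 ≤ (1 - δ) * ‖x‖ + σz * matNorm Wr * ‖u‖ + σz * ‖br‖ := by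
    have := mul_nonneg (by linarith : (0:ℝ) ≤ 1 - δ) hx0
    have := mul_nonneg (mul_nonneg hσz0.le hWr0) hu0
    have := mul_nonneg hσz0.le hbr0
    linarith
  rw [pi_norm_le_iff_of_nonneg hRHS0]
  intro j
  rw [Real.norm_eq_abs, gruStep_apply]
  -- bound on the z-argument
  have hargz : |(Wz.mulVec u + Uz.mulVec x + bz) j| ≤ catNorm Wz Uz bz := by
    have h1 : |Wz.mulVec u j| ≤ ∑ j', |Wz j j'| := by
      calc |Wz.mulVec u j| ≤ (∑ j', |Wz j j'|) * ‖u‖ := mulVec_abs_le _ _ _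
        _ ≤ (∑ j', |Wz j j'|) * 1 :=
            mul_le_mul_of_nonneg_left hu (Finset.sum_nonneg fun _ _ => abs_nonneg _)
        _ = _ := mul_one _
    have h2 : |Uz.mulVec x j| ≤ ∑ j', |Uz j j'| := by
      calc |Uz.mulVec x j| ≤ (∑ j', |Uz j j'|) * ‖x‖ := mulVec_abs_le _ _ _
        _ ≤ (∑ j', |Uz j j'|) * 1 :=
            mul_le_mul_of_nonneg_left hx (Finset.sum_nonneg fun _ _ => abs_nonneg _)
        _ = _ := mul_one _
    have h3 := row_le_catNorm Wz Uz bz j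
    have h4 : |(Wz.mulVec u + Uz.mulVec x + bz) j| ≤
        |Wz.mulVec u j| + |Uz.mulVec x j| + |bz j| := by
      simp only [Pi.add_apply]
      exact (abs_add_le _ _).trans (by linarith [abs_add_le (Wz.mulVec u j) (Uz.mulVec x j)])
    linarith
  set zj := _root_.sigmoid ((Wz.mulVec u + Uz.mulVec x + bz) j) with hzj
  have hz_le : zj ≤ σz := sigmoid_mono ((le_abs_self _).trans hargz)
  have hz_lb : 1 - zj ≤ σz := by
    rw [hzj, one_sub_sigmoid]
    exact sigmoid_mono ((neg_le_abs _).trans hargz)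
  have hz0 : 0 < zj := sigmoid_pos _
  have hz1 : zj < 1 := sigmoid_lt_one _
  -- bound on f
  set f : Fin nx → ℝ := fun i => _root_.sigmoid ((Wf.mulVec u + Uf.mulVec x + bf) i) with hf
  have hf_bound : ∀ i, |f i * x i| ≤ σf * ‖x‖ := by
    intro i
    have hargf : |(Wf.mulVec u + Uf.mulVec x + bf) i| ≤ catNorm Wf Uf bf := by
      have h1 : |Wf.mulVec u i| ≤ ∑ j', |Wf i j'| := by
        calc |Wf.mulVec u i| ≤ (∑ j', |Wf i j'|) * ‖u‖ := mulVec_abs_le _ _ _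
          _ ≤ (∑ j', |Wf i j'|) * 1 :=
              mul_le_mul_of_nonneg_left hu (Finset.sum_nonneg fun _ _ => abs_nonneg _)
          _ = _ := mul_one _
      have h2 : |Uf.mulVec x i| ≤ ∑ j', |Uf i j'| := by
        calc |Uf.mulVec x i| ≤ (∑ j', |Uf i j'|) * ‖x‖ := mulVec_abs_le _ _ _
          _ ≤ (∑ j', |Uf i j'|) * 1 :=
              mul_le_mul_of_nonneg_left hx (Finset.sum_nonneg fun _ _ => abs_nonneg _)
          _ = _ := mul_one _
      have h3 := row_le_catNorm Wf Uf bf i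
      have h4 : |(Wf.mulVec u + Uf.mulVec x + bf) i| ≤
          |Wf.mulVec u i| + |Uf.mulVec x i| + |bf i| := by
        simp only [Pi.add_apply]
        exact (abs_add_le _ _).trans (by linarith [abs_add_le (Wf.mulVec u i) (Uf.mulVec x i)])
      linarith
    have hfle : f i ≤ σf := sigmoid_mono ((le_abs_self _).trans hargf)
    have hfpos : 0 < f i := sigmoid_pos _
    rw [abs_mul, abs_of_pos hfpos]
    have hxi : |x i| ≤ ‖x‖ := (Real.norm_eq_abs (x i)) ▸ norm_le_pi_norm x i
    exact mul_le_mul hfle hxi (abs_nonneg _) hσf0.le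
  -- bound on the tanh argument
  have hT : |Real.tanh ((Wr.mulVec u + Ur.mulVec (f * x) + br) j)| ≤
      matNorm Wr * ‖u‖ + a * ‖x‖ + ‖br‖ := by
    refine (abs_tanh_le _).trans ?_
    have h1 : |Wr.mulVec u j| ≤ matNorm Wr * ‖u‖ :=
      (mulVec_abs_le _ _ _).trans (mul_le_mul_of_nonneg_right (rowSum_le_matNorm _ _) hu0)
    have h2 : |Ur.mulVec (f * x) j| ≤ a * ‖x‖ := by
      have hsfx : 0 ≤ σf * ‖x‖ := mul_nonneg hσf0.le hx0
      calc |Ur.mulVec (f * x) j| = |∑ k, Ur j k * (f k * x k)| := by rfl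
        _ ≤ ∑ k, |Ur j k * (f k * x k)| := Finset.abs_sum_le_sum_abs _ _
        _ ≤ ∑ k, |Ur j k| * (σf * ‖x‖) := by
            refine Finset.sum_le_sum fun k _ => ?_
            rw [abs_mul]
            exact mul_le_mul_of_nonneg_left (hf_bound k) (abs_nonneg _)
        _ = (∑ k, |Ur j k|) * (σf * ‖x‖) := by rw [← Finset.sum_mul]
        _ ≤ matNorm Ur * (σf * ‖x‖) :=
            mul_le_mul_of_nonneg_right (rowSum_le_matNorm _ _) hsfx
        _ = a * ‖x‖ := by rw [ha]; ring
    have h3 : |br j| ≤ ‖br‖ := (Real.norm_eq_abs (br j)) ▸ norm_le_pi_norm br j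
    have h4 : |(Wr.mulVec u + Ur.mulVec (f * x) + br) j| ≤
        |Wr.mulVec u j| + |Ur.mulVec (f * x) j| + |br j| := by
      simp only [Pi.add_apply]
      exact (abs_add_le _ _).trans (by linarith [abs_add_le (Wr.mulVec u j) (Ur.mulVec (f * x) j)])
    linarith
  -- final arithmetic
  set T := Real.tanh ((Wr.mulVec u + Ur.mulVec (f * x) + br) j) with hTdef
  have hxj : |x j| ≤ ‖x‖ := (Real.norm_eq_abs (x j)) ▸ norm_le_pi_norm x j
  have habs : |zj * x j + (1 - zj) * T| ≤ zj * |x j| + (1 - zj) * |T| := by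
    refine (abs_add_le _ _).trans ?_
    rw [abs_mul, abs_mul, abs_of_pos hz0, abs_of_pos (by linarith : (0:ℝ) < 1 - zj)]
  have e1 : (1 - zj) * |T| ≤ (1 - zj) * (matNorm Wr * ‖u‖ + a * ‖x‖ + ‖br‖) :=
    mul_le_mul_of_nonneg_left hT (by linarith)
  have e2 : zj * |x j| ≤ zj * ‖x‖ := mul_le_mul_of_nonneg_left hxj hz0.le
  have e3 : (1 - zj) * (matNorm Wr * ‖u‖) ≤ σz * (matNorm Wr * ‖u‖) :=
    mul_le_mul_of_nonneg_right hz_lb (mul_nonneg hWr0 hu0)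
  have e4 : (1 - zj) * ‖br‖ ≤ σz * ‖br‖ := mul_le_mul_of_nonneg_right hz_lb hbr0
  have e5 : zj * ‖x‖ + (1 - zj) * (a * ‖x‖) ≤ (1 - δ) * ‖x‖ := by
    have hz : zj * (1 - a) ≤ σz * (1 - a) :=
      mul_le_mul_of_nonneg_right hz_le (by linarith)
    nlinarith
  calc |zj * x j + (1 - zj) * T| ≤ zj * |x j| + (1 - zj) * |T| := habs
    _ ≤ zj * ‖x‖ + ((1 - zj) * (matNorm Wr * ‖u‖) + (1 - zj) * (a * ‖x‖)
        + (1 - zj) * ‖br‖) := by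
        have : (1 - zj) * (matNorm Wr * ‖u‖ + a * ‖x‖ + ‖br‖) =
            (1 - zj) * (matNorm Wr * ‖u‖) + (1 - zj) * (a * ‖x‖) + (1 - zj) * ‖br‖ := by ring
        linarith
    _ ≤ (1 - δ) * ‖x‖ + σz * matNorm Wr * ‖u‖ + σz * ‖br‖ := by
        have : σz * (matNorm Wr * ‖u‖) = σz * matNorm Wr * ‖u‖ := by ring
        linarith
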